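/- Let γ: ℝ → [0,∞] be measurable, symmetric (γ(−s) = γ(s)) and locally integrable, and set Γ_t = 2∫₀ᵗ γ(s) ds. Let μ be a Borel measure on ℝ satisfying Dalang's condition ∫_ℝ 1/(1+ξ²) μ(dξ) < ∞. For n ≥ 1 and t > 0 define I_n(t) = ∫_{0<t₁<⋯<t_n<t} ∏_{j=1}^{n} ( ∫_ℝ S(t_{j+1} − t_j, ξ) μ(dξ) ) dt₁⋯dt_n with the convention t_{n+1} = t, and I₀(t) = 1. Then for every integer k ≥ 0 and every t > 0, the series ∑_{n ≥ 0} n^k Γ_tⁿ I_n(t) converges. (This yields the summability ∑_{n≥0} (n^k/n!) α_n(t) < ∞ of the paper's Lemma 3.2, since α_n(t) ≤ Γ_tⁿ n! I_n(t).) -/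

import Mathlib

open MeasureTheory
open scoped ENNReal BigOperators Nat

/-- `S(u,ξ) = sin²(uξ)/ξ²` for `ξ ≠ 0`, `S(u,0) = u²`. -/
noncomputable def waveS (u ξ : ℝ) : ℝ :=
  if ξ = 0 then u ^ 2 else Real.sin (u * ξ) ^ 2 / ξ ^ 2

/-- The open simplex `{0 < t₁ < ⋯ < t_n < t}` in `ℝⁿ`. -/
def simplex (n : ℕ) (t : ℝ) : Set (Fin n → ℝ) :=
  {u | (∀ i, 0 < u i ∧ u i < t) ∧ ∀ i j : Fin n, i < j → u i < u j}

/-- `t_{j+1}`, with the convention `t_{n+1} = t`. -/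
noncomputable def nextVal {n : ℕ} (t : ℝ) (u : Fin n → ℝ) (j : Fin n) : ℝ :=
  if h : (j : ℕ) + 1 < n then u ⟨(j : ℕ) + 1, h⟩ else t

lemma waveS_le_aux (u ξ : ℝ) : waveS u ξ ≤ (1 + u ^ 2) * (1 / (1 + ξ ^ 2)) := by
  unfold waveS
  split_ifs with h
  · subst h
    norm_num
  · have h1 : Real.sin (u * ξ) ^ 2 ≤ (u * ξ) ^ 2 := Real.sin_sq_le_sq
    have h2 : Real.sin (u * ξ) ^ 2 ≤ 1 := Real.sin_sq_le_one _
    have hξ : 0 < ξ ^ 2 := by positivity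
    rw [mul_one_div, div_le_div_iff₀ hξ (by positivity)]
    nlinarith

lemma measurableSet_simplex (n : ℕ) (t : ℝ) : MeasurableSet (simplex n t) := by
  have heq : simplex n t =
      (⋂ i, ({u : Fin n → ℝ | 0 < u i} ∩ {u | u i < t})) ∩
        ⋂ i, ⋂ j, {u : Fin n → ℝ | i < j → u i < u j} := by
    ext u
    simp only [simplex, Set.mem_setOf_eq, Set.mem_inter_iff, Set.mem_iInter]
    try tauto
  rw [heq]
  refine (MeasurableSet.iInter fun i => ?_).inter
    (MeasurableSet.iInter fun i => MeasurableSet.iInter fun j => ?_)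
  · exact (measurableSet_lt measurable_const (measurable_pi_apply i)).inter
      (measurableSet_lt (measurable_pi_apply i) measurable_const)
  · by_cases hij : i < j
    · simp only [hij, true_implies]
      exact measurableSet_lt (measurable_pi_apply i) (measurable_pi_apply j)
    · simp [hij]

lemma vol_simplex_le (n : ℕ) (t : ℝ) (ht : 0 ≤ t) :
    volume (simplex n t) ≤ ENNReal.ofReal t ^ n / (n ! : ℝ≥0∞) := by
  classical
  set T : Equiv.Perm (Fin n) → ((Fin n → ℝ) ≃ᵐ (Fin n → ℝ)) :=
    fun σ => MeasurableEquiv.piCongrLeft (fun _ => ℝ) σ with hTdef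
  set E : Equiv.Perm (Fin n) → Set (Fin n → ℝ) := fun σ => (T σ) ⁻¹' simplex n t with hEdef
  have hT : ∀ (σ : Equiv.Perm (Fin n)) (x : Fin n → ℝ) (i : Fin n),
      (T σ) x (σ i) = x i := by
    intro σ x i
    exact MeasurableEquiv.piCongrLeft_apply_apply (β := fun _ : Fin n => ℝ) σ x i
  have hmeasE : ∀ σ, MeasurableSet (E σ) :=
    fun σ => (measurableSet_simplex n t).preimage (T σ).measurable
  have hvol : ∀ σ, volume (E σ) = volume (simplex n t) := by
    intro σ
    exact (volume_measurePreserving_piCongrLeft (fun _ => ℝ) σ).measure_preimage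
      (measurableSet_simplex n t).nullMeasurableSet
  have hdisj : Pairwise (Function.onFun Disjoint E) := by
    intro σ τ hne
    rw [Function.onFun, Set.disjoint_left]
    intro x hxσ hxτ
    have hv : ∀ i j : Fin n, i < j → (T σ) x i < (T σ) x j := hxσ.2
    have hw : ∀ i j : Fin n, i < j → (T τ) x i < (T τ) x j := hxτ.2
    -- π i = σ (τ.symm i); then (T τ) x i = (T σ) x (π i)
    set π : Equiv.Perm (Fin n) := τ.symm.trans σ with hπdef
    have hwv : ∀ i, (T τ) x i = (T σ) x (π i) := by
      intro i
      have h1 : (T τ) x i = x (τ.symm i) := by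
        conv_lhs => rw [show i = τ (τ.symm i) by simp]
        exact hT τ x (τ.symm i)
      have h2 : (T σ) x (π i) = x (τ.symm i) := by
        have : π i = σ (τ.symm i) := rfl
        rw [this]; exact hT σ x (τ.symm i)
      rw [h1, h2]
    have hπmono : StrictMono (π : Fin n → Fin n) := by
      intro i j hij
      have h1 : (T σ) x (π i) < (T σ) x (π j) := by
        rw [← hwv i, ← hwv j]; exact hw i j hij
      by_contra hle
      push_neg at hle
      rcases lt_or_eq_of_le hle with h | h
      · exact absurd (hv _ _ h) (by linarith)
      · rw [h] at h1; exact lt_irrefl _ h1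
    have hid : ∀ i : Fin n, π i = i := by
      intro i
      have := Fin.coe_orderIso_apply (StrictMono.orderIsoOfSurjective _ hπmono π.surjective) i
      rw [StrictMono.coe_orderIsoOfSurjective] at this
      exact Fin.ext this
    apply hne
    have hsymm : τ.symm = σ.symm := by
      ext i
      have h1 : σ (τ.symm i) = i := hid i
      exact congrArg Fin.val ((Equiv.eq_symm_apply σ).mpr h1)
    calc σ = σ.symm.symm := by simp
      _ = τ.symm.symm := by rw [hsymm]
      _ = τ := by simp
  have hsub : ∀ σ, E σ ⊆ Set.pi Set.univ (fun _ : Fin n => Set.Ioo (0 : ℝ) t) := by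
    intro σ x hx i _
    have h1 := hx.1 (σ i)
    rw [hT σ x i] at h1
    exact ⟨h1.1, h1.2⟩
  have hbox : volume (Set.pi Set.univ (fun _ : Fin n => Set.Ioo (0 : ℝ) t))
      = ENNReal.ofReal t ^ n := by
    rw [volume_pi_pi]
    simp [Real.volume_Ioo]
  have hkey : (n ! : ℝ≥0∞) * volume (simplex n t) ≤ ENNReal.ofReal t ^ n := by
    calc (n ! : ℝ≥0∞) * volume (simplex n t)
        = ∑ σ : Equiv.Perm (Fin n), volume (E σ) := by
          simp only [hvol, Finset.sum_const, Finset.card_univ, Fintype.card_perm, Fintype.card_fin, nsmul_eq_mul]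
      _ = volume (⋃ σ, E σ) := by
          rw [measure_iUnion hdisj hmeasE, tsum_fintype]
      _ ≤ volume (Set.pi Set.univ (fun _ : Fin n => Set.Ioo (0 : ℝ) t)) :=
          measure_mono (Set.iUnion_subset hsub)
      _ = ENNReal.ofReal t ^ n := hbox
  rw [ENNReal.le_div_iff_mul_le (Or.inl (by exact_mod_cast Nat.factorial_ne_zero n))
    (Or.inl (ENNReal.natCast_ne_top _))]
  rw [mul_comm]
  exact hkey

lemma summable_aux (k : ℕ) (x : ℝ) (hx : 0 ≤ x) :
    Summable (fun n : ℕ => (n : ℝ) ^ k * x ^ n / n !) := by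
  have hg : Summable (fun n : ℕ => (n : ℝ) ^ k * (1 / 2 : ℝ) ^ n) :=
    summable_pow_mul_geometric_of_norm_lt_one k (by rw [Real.norm_eq_abs, abs_of_pos] <;> norm_num)
  apply summable_of_isBigO_nat hg
  rw [Asymptotics.isBigO_iff]
  refine ⟨1, ?_⟩
  have h0 : Filter.Tendsto (fun n : ℕ => (2 * x) ^ n / n !) Filter.atTop (nhds 0) :=
    (Real.summable_pow_div_factorial (2 * x)).tendsto_atTop_zero
  filter_upwards [h0.eventually_lt_const zero_lt_one] with n hn
  have hn' : (2 * x) ^ n / n ! ≤ 1 := hn.le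
  have key : x ^ n / n ! ≤ (1 / 2 : ℝ) ^ n := by
    have hxx : x ^ n = (2 * x) ^ n * (1 / 2 : ℝ) ^ n := by
      rw [← mul_pow]; ring_nf
    calc x ^ n / n ! = ((2 * x) ^ n / n !) * (1 / 2 : ℝ) ^ n := by
          rw [hxx, mul_div_right_comm]
      _ ≤ 1 * (1 / 2 : ℝ) ^ n := mul_le_mul_of_nonneg_right hn' (by positivity)
      _ = (1 / 2 : ℝ) ^ n := one_mul _
  rw [Real.norm_eq_abs, Real.norm_eq_abs, abs_of_nonneg (by positivity),
    abs_of_nonneg (by positivity), one_mul, mul_div_assoc]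
  exact mul_le_mul_of_nonneg_left key (by positivity)

theorem stmt7 (γ : ℝ → ℝ≥0∞) (hγm : Measurable γ) (hγs : ∀ s : ℝ, γ (-s) = γ s)
    (hγloc : ∀ K : Set ℝ, IsCompact K → ∫⁻ s in K, γ s < ⊤)
    (μ : Measure ℝ) (hDalang : ∫⁻ ξ, ENNReal.ofReal (1 / (1 + ξ ^ 2)) ∂μ < ⊤)
    (t : ℝ) (ht : 0 < t) (k : ℕ)
    (Γt : ℝ) (hΓt : Γt = 2 * (∫⁻ s in Set.Ioc (0 : ℝ) t, γ s).toReal)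
    (I : ℕ → ℝ) (hI0 : I 0 = 1)
    (hI : ∀ n : ℕ, 1 ≤ n → I n = ∫ u in simplex n t,
      ∏ j : Fin n, (∫⁻ ξ, ENNReal.ofReal (waveS (nextVal t u j - u j) ξ) ∂μ).toReal) :
    Summable (fun n : ℕ => (n : ℝ) ^ k * Γt ^ n * I n) := by
  classical
  set D : ℝ≥0∞ := ∫⁻ ξ, ENNReal.ofReal (1 / (1 + ξ ^ 2)) ∂μ with hD
  set C : ℝ := (1 + t ^ 2) * D.toReal with hCdef
  have hC0 : 0 ≤ C := by
    rw [hCdef]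
    positivity
  clear_value D C
  -- bound on a single factor
  have hfactor : ∀ d : ℝ, 0 < d → d ≤ t →
      (∫⁻ ξ, ENNReal.ofReal (waveS d ξ) ∂μ).toReal ≤ C := by
    intro d hd hdt
    have h1 : (∫⁻ ξ, ENNReal.ofReal (waveS d ξ) ∂μ) ≤ ENNReal.ofReal (1 + t ^ 2) * D := by
      calc (∫⁻ ξ, ENNReal.ofReal (waveS d ξ) ∂μ)
          ≤ ∫⁻ ξ, ENNReal.ofReal (1 + t ^ 2) * ENNReal.ofReal (1 / (1 + ξ ^ 2)) ∂μ := by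
            apply lintegral_mono
            intro ξ
            dsimp only
            rw [← ENNReal.ofReal_mul (by nlinarith [sq_nonneg t])]
            apply ENNReal.ofReal_le_ofReal
            calc waveS d ξ ≤ (1 + d ^ 2) * (1 / (1 + ξ ^ 2)) := waveS_le_aux d ξ
              _ ≤ (1 + t ^ 2) * (1 / (1 + ξ ^ 2)) := by
                  have hd2 : d ^ 2 ≤ t ^ 2 := by nlinarith
                  have hpos : (0 : ℝ) ≤ 1 / (1 + ξ ^ 2) := by positivity
                  nlinarith
        _ = ENNReal.ofReal (1 + t ^ 2) * D := by
            rw [hD]; exact lintegral_const_mul' _ _ ENNReal.ofReal_ne_top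
    have h2 : ENNReal.ofReal (1 + t ^ 2) * D ≠ ⊤ :=
      ENNReal.mul_ne_top ENNReal.ofReal_ne_top hDalang.ne
    calc (∫⁻ ξ, ENNReal.ofReal (waveS d ξ) ∂μ).toReal
        ≤ (ENNReal.ofReal (1 + t ^ 2) * D).toReal := ENNReal.toReal_mono h2 h1
      _ = C := by
          rw [hCdef, ENNReal.toReal_mul, ENNReal.toReal_ofReal (by nlinarith [sq_nonneg t])]
  -- bound on the product over the simplex
  have hprod : ∀ (n : ℕ) (u : Fin n → ℝ), u ∈ simplex n t →
      ‖∏ j : Fin n, (∫⁻ ξ, ENNReal.ofReal (waveS (nextVal t u j - u j) ξ) ∂μ).toReal‖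
        ≤ C ^ n := by
    intro n u hu
    have hterm : ∀ j : Fin n,
        (∫⁻ ξ, ENNReal.ofReal (waveS (nextVal t u j - u j) ξ) ∂μ).toReal ≤ C := by
      intro j
      have hj := hu.1 j
      have hd : 0 < nextVal t u j - u j ∧ nextVal t u j - u j ≤ t := by
        unfold nextVal
        split_ifs with h
        · have hlt : j < (⟨(j : ℕ) + 1, h⟩ : Fin n) := by
            simp [Fin.lt_def]
          have h1 := hu.2 j _ hlt
          have h2 := hu.1 ⟨(j : ℕ) + 1, h⟩
          constructor <;> [linarith; linarith [hj.1, h2.2]]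
        · constructor <;> [linarith [hj.2]; linarith [hj.1]]
      exact hfactor _ hd.1 hd.2
    rw [Real.norm_eq_abs, abs_of_nonneg
      (Finset.prod_nonneg fun j _ => ENNReal.toReal_nonneg)]
    calc (∏ j : Fin n, (∫⁻ ξ, ENNReal.ofReal (waveS (nextVal t u j - u j) ξ) ∂μ).toReal)
        ≤ ∏ _j : Fin n, C :=
          Finset.prod_le_prod (fun j _ => ENNReal.toReal_nonneg) (fun j _ => hterm j)
      _ = C ^ n := by simp
  -- volume facts
  have hvolfin : ∀ n : ℕ, volume (simplex n t) < ⊤ := by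
    intro n
    refine (vol_simplex_le n t ht.le).trans_lt ?_
    exact ENNReal.div_lt_top (ENNReal.pow_ne_top ENNReal.ofReal_ne_top)
      (by exact_mod_cast Nat.factorial_ne_zero n)
  have hvolreal : ∀ n : ℕ, (volume (simplex n t)).toReal ≤ t ^ n / n ! := by
    intro n
    have h1 := vol_simplex_le n t ht.le
    have h2 : (ENNReal.ofReal t ^ n / (n ! : ℝ≥0∞)) ≠ ⊤ :=
      (ENNReal.div_lt_top (ENNReal.pow_ne_top ENNReal.ofReal_ne_top)
        (by exact_mod_cast Nat.factorial_ne_zero n)).ne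
    calc (volume (simplex n t)).toReal
        ≤ (ENNReal.ofReal t ^ n / (n ! : ℝ≥0∞)).toReal := ENNReal.toReal_mono h2 h1
      _ = t ^ n / n ! := by
          rw [ENNReal.toReal_div, ENNReal.toReal_pow, ENNReal.toReal_ofReal ht.le,
            ENNReal.toReal_natCast]
  -- bound on I n
  have hIbound : ∀ n : ℕ, |I n| ≤ C ^ n * (t ^ n / n !) := by
    intro n
    rcases Nat.eq_zero_or_pos n with hn | hn
    · subst hn; simp [hI0]
    · rw [hI n hn]
      have hb := norm_setIntegral_le_of_norm_le_const_ae' (μ := volume)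
        (hvolfin n)
        (Filter.Eventually.of_forall (hprod n))
      rw [Real.norm_eq_abs] at hb
      calc |∫ u in simplex n t,
            ∏ j : Fin n, (∫⁻ ξ, ENNReal.ofReal (waveS (nextVal t u j - u j) ξ) ∂μ).toReal|
          ≤ C ^ n * (volume (simplex n t)).toReal := hb
        _ ≤ C ^ n * (t ^ n / n !) :=
            mul_le_mul_of_nonneg_left (hvolreal n) (pow_nonneg hC0 n)
  -- conclude
  have hΓ0 : 0 ≤ Γt := by rw [hΓt]; positivity
  have hx0 : 0 ≤ Γt * (C * t) := mul_nonneg hΓ0 (mul_nonneg hC0 ht.le)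
  have hsum := summable_aux k (Γt * (C * t)) hx0
  have hb : ∀ n : ℕ, |(n : ℝ) ^ k * Γt ^ n * I n| ≤ (n : ℝ) ^ k * (Γt * (C * t)) ^ n / n ! := by
    intro n
    rw [abs_mul, abs_mul, abs_of_nonneg (by positivity : (0:ℝ) ≤ (n : ℝ) ^ k),
      abs_of_nonneg (pow_nonneg hΓ0 n)]
    calc (n : ℝ) ^ k * Γt ^ n * |I n|
        ≤ (n : ℝ) ^ k * Γt ^ n * (C ^ n * (t ^ n / n !)) := by
          apply mul_le_mul_of_nonneg_left (hIbound n)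
          positivity
      _ = (n : ℝ) ^ k * (Γt * (C * t)) ^ n / n ! := by
          rw [mul_pow, mul_pow]; ring
  have habs : Summable (fun n : ℕ => |(n : ℝ) ^ k * Γt ^ n * I n|) :=
    Summable.of_nonneg_of_le (fun n => abs_nonneg _) hb hsum
  exact habs.of_abs
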